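/- Let (a_i) be a sequence in ℓ_p for some 0 < p < 2, and for N ∈ ℕ let ã^N denote the sequence obtained by keeping the N largest entries of (a_i) in absolute value and setting all others to zero. Then ‖a - ã^N‖_{ℓ_2} ≤ C_p · N^{1/2 - 1/p} · ‖a‖_{ℓ_p} for a constant C_p depending only on p. -/

import Mathlib

/-- Jackson-type direct estimate for best `N`-term approximation in `ℓ₂` of an
`ℓ_p` sequence, `0 < p < 2`.  The set `S` consists of (indices of) the `N`
largest entries of `a` in absolute value; the approximant keeps those entries
and sets everything else to zero. -/
theorem stmt1 (p : ℝ) (hp : 0 < p) (hp2 : p < 2) :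
    ∃ C > 0, ∀ (a : ℕ → ℂ), Summable (fun i => ‖a i‖ ^ p) →
      ∀ (N : ℕ), 1 ≤ N → ∀ (S : Finset ℕ), S.card = N →
        (∀ i ∈ S, ∀ j ∉ S, ‖a j‖ ≤ ‖a i‖) →
        (∑' i : ℕ, (if i ∈ S then 0 else ‖a i‖ ^ 2)) ^ ((1:ℝ)/2) ≤
          C * (N : ℝ) ^ ((1:ℝ)/2 - 1/p) * (∑' i : ℕ, ‖a i‖ ^ p) ^ ((1:ℝ)/p) := by
  refine ⟨1, one_pos, fun a ha N hN S hS hmax => ?_⟩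
  have hp2' : (0:ℝ) < 2 - p := by linarith
  have hN0 : (0:ℝ) < (N:ℝ) := by exact_mod_cast hN
  set T := ∑' i, ‖a i‖ ^ p with hT
  have hT0 : 0 ≤ T := tsum_nonneg fun i => Real.rpow_nonneg (norm_nonneg _) p
  have hSne : S.Nonempty := Finset.card_pos.mp (by omega)
  obtain ⟨i0, hi0S, hi0⟩ := S.exists_min_image (fun i => ‖a i‖) hSne
  set ε := ‖a i0‖ with hε
  have hε0 : 0 ≤ ε := norm_nonneg _
  have hj : ∀ j, j ∉ S → ‖a j‖ ≤ ε := fun j hjS => hmax i0 hi0S j hjS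
  have hRHS0 : 0 ≤ (N:ℝ) ^ ((1:ℝ)/2 - 1/p) * T ^ ((1:ℝ)/p) := by positivity
  rw [one_mul]
  -- N ε^p ≤ T
  have hNε : (N:ℝ) * ε ^ p ≤ T := by
    have h1 : ∑ i ∈ S, ε ^ p ≤ ∑ i ∈ S, ‖a i‖ ^ p := by
      apply Finset.sum_le_sum
      intro i hi
      exact Real.rpow_le_rpow hε0 (hi0 i hi) hp.le
    have h2 : ∑ i ∈ S, ‖a i‖ ^ p ≤ T :=
      Summable.sum_le_tsum S (fun i _ => Real.rpow_nonneg (norm_nonneg _) p) ha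
    calc (N:ℝ) * ε ^ p = ∑ i ∈ S, ε ^ p := by
          rw [Finset.sum_const, hS, nsmul_eq_mul]
      _ ≤ T := h1.trans h2
  have hεT : ε ^ p ≤ T / N := by
    rw [le_div_iff₀ hN0]; linarith [hNε]
  rcases hT0.eq_or_lt with hT0' | hTpos
  · -- degenerate case: T = 0, hence all tail entries vanish
    have hεz : ε = 0 := by
      have h1 : ε ^ p ≤ 0 := by rw [← hT0'] at hεT; simpa using hεT
      have h2 : 0 ≤ ε ^ p := Real.rpow_nonneg hε0 p
      have h3 : ε ^ p = 0 := le_antisymm h1 h2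
      by_contra h
      have : 0 < ε := lt_of_le_of_ne hε0 (Ne.symm h)
      exact absurd h3 (ne_of_gt (Real.rpow_pos_of_pos this p))
    have hz : ∀ i, (if i ∈ S then 0 else ‖a i‖ ^ 2) = 0 := by
      intro i
      by_cases hi : i ∈ S
      · simp [hi]
      · simp only [hi, if_false]
        have := hj i hi
        rw [hεz] at this
        have : ‖a i‖ = 0 := le_antisymm this (norm_nonneg _)
        simp [this]
    rw [tsum_congr hz, tsum_zero, Real.zero_rpow (by norm_num)]
    exact hRHS0
  -- main case: T > 0
  -- pointwise bound for the tail terms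
  have hpt : ∀ i, (if i ∈ S then 0 else ‖a i‖ ^ 2) ≤ ε ^ (2 - p) * ‖a i‖ ^ p := by
    intro i
    by_cases hi : i ∈ S
    · simp only [hi, if_true]
      positivity
    · simp only [hi, if_false]
      have h2 : ‖a i‖ ^ 2 = ‖a i‖ ^ ((2:ℝ)) := by
        rw [show ((2:ℝ)) = ((2:ℕ):ℝ) by norm_num, Real.rpow_natCast]
      have h3 : ‖a i‖ ^ ((2:ℝ)) = ‖a i‖ ^ (2 - p) * ‖a i‖ ^ p := by
        rw [← Real.rpow_add' (norm_nonneg _) (show (2 - p) + p ≠ 0 by norm_num)]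
        congr 1
        ring
      rw [h2, h3]
      exact mul_le_mul_of_nonneg_right
        (Real.rpow_le_rpow (norm_nonneg _) (hj i hi) hp2'.le)
        (Real.rpow_nonneg (norm_nonneg _) p)
  have hsum2 : Summable (fun i => if i ∈ S then 0 else ‖a i‖ ^ 2) := by
    apply Summable.of_nonneg_of_le (fun i => by positivity) hpt
    exact ha.mul_left _
  have htail : (∑' i, if i ∈ S then 0 else ‖a i‖ ^ 2) ≤ ε ^ (2 - p) * T := by
    calc (∑' i, if i ∈ S then 0 else ‖a i‖ ^ 2)
        ≤ ∑' i, ε ^ (2 - p) * ‖a i‖ ^ p := Summable.tsum_le_tsum hpt hsum2 (ha.mul_left _)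
      _ = ε ^ (2 - p) * T := tsum_mul_left
  have htail0 : 0 ≤ (∑' i, if i ∈ S then 0 else ‖a i‖ ^ 2) :=
    tsum_nonneg fun i => by positivity
  -- main bound on the tail
  have key : (∑' i, if i ∈ S then 0 else ‖a i‖ ^ 2)
      ≤ ((N:ℝ) ^ ((1:ℝ)/2 - 1/p) * T ^ ((1:ℝ)/p)) ^ ((2:ℝ)) := by
    have hq : ε ^ (2 - p) ≤ (T / N) ^ ((2 - p)/p) := by
      have h : ε ^ (2 - p) = (ε ^ p) ^ ((2 - p)/p) := by
        rw [← Real.rpow_mul hε0]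
        congr 1
        field_simp
      rw [h]
      exact Real.rpow_le_rpow (Real.rpow_nonneg hε0 p) hεT (by positivity)
    have h1 : (∑' i, if i ∈ S then 0 else ‖a i‖ ^ 2) ≤ (T / N) ^ ((2 - p)/p) * T :=
      htail.trans (by gcongr)
    refine h1.trans (le_of_eq ?_)
    rw [Real.mul_rpow (by positivity) (by positivity),
      ← Real.rpow_mul (le_of_lt hN0), ← Real.rpow_mul hT0,
      Real.div_rpow hT0 hN0.le]
    rw [show ((1:ℝ)/2 - 1/p) * 2 = -((2 - p)/p) by field_simp; ring,
      show ((1:ℝ)/p) * 2 = (2 - p)/p + 1 by field_simp; ring,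
      Real.rpow_neg hN0.le, Real.rpow_add_one (ne_of_gt hTpos)]
    ring
  -- conclude by taking square roots
  have hfin := Real.rpow_le_rpow htail0 key (by norm_num : (0:ℝ) ≤ 1/2)
  rw [← Real.rpow_mul hRHS0, show (2:ℝ) * (1/2) = 1 by norm_num, Real.rpow_one] at hfin
  exact hfin
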